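/- Let C be a cycle decomposed into consecutive vertex-disjoint clusters X_1, …, X_q (in cyclic order along C), each cluster having weight w_j ≤ k, with Σ_j w_j ≥ 2k, and suppose the total cost of the edges of C plus the costs of all clusters is at most δ·Σ_j w_j. Then there is a consecutive segment of clusters X_a, X_{a+1}, …, X_b whose total weight is between k and 2k, and such that the cost of these clusters plus the cost of the edges of C connecting them is at most 2δk. -/

import Mathlib

/-- Partial sums of `w` starting at `a`. -/
private def pS (w : ℕ → ℝ) (a n : ℕ) : ℝ := ∑ t ∈ Finset.range n, w (a + t)

private lemma pS_mono (w : ℕ → ℝ) (hw : ∀ i, 0 ≤ w i) (a : ℕ) {m n : ℕ} (h : m ≤ n) :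
    pS w a m ≤ pS w a n :=
  Finset.sum_le_sum_of_subset_of_nonneg (Finset.range_subset_range.2 h) (fun i _ _ => hw _)

private lemma pS_per (w : ℕ → ℝ) (q : ℕ) (hper : ∀ j, w (j + q) = w j) (a n : ℕ) :
    pS w (a + q) n = pS w a n := by
  refine Finset.sum_congr rfl fun t _ => ?_
  have h : a + q + t = a + t + q := by ring
  rw [h, hper]

private lemma pS_Ico (w : ℕ → ℝ) (b m : ℕ) :
    ∑ u ∈ Finset.Ico b m, w u = pS w b (m - b) := by
  rw [Finset.sum_Ico_eq_sum_range]; rfl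

private lemma pS_cycle (w : ℕ → ℝ) (q : ℕ) (hper : ∀ j, w (j + q) = w j) (a : ℕ) :
    pS w a q = pS w 0 q := by
  induction a with
  | zero => rfl
  | succ a ih =>
    have h1 : pS w a (q + 1) = pS w a q + w (a + q) := Finset.sum_range_succ _ _
    have h2 : pS w a (q + 1) = (∑ t ∈ Finset.range q, w (a + (t + 1))) + w (a + 0) :=
      Finset.sum_range_succ' _ _
    have h3 : ∑ t ∈ Finset.range q, w (a + (t + 1)) = pS w (a + 1) q := by
      refine Finset.sum_congr rfl fun t _ => ?_
      congr 1; omega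
    rw [hper] at h1
    rw [h3] at h2
    have : pS w (a + 1) q = pS w a q := by
      rw [h1] at h2
      simpa using h2.symm
    rw [this, ih]

private lemma win (w : ℕ → ℝ) (k : ℝ) (hk : 0 ≤ k) (hw : ∀ i, 0 ≤ w i) (m : ℕ)
    (T : Finset ℕ) (hTm : ∀ b ∈ T, b ≤ m) (hTs : ∀ b ∈ T, pS w b (m - b) < k) :
    ∑ b ∈ T, w b ≤ k + w m := by
  classical
  set T' := T.erase m with hT'
  have hsub : T ⊆ insert m T' := by
    intro b hb
    by_cases hbm : b = m
    · simp [hbm]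
    · exact Finset.mem_insert_of_mem (Finset.mem_erase.2 ⟨hbm, hb⟩)
  have h1 : ∑ b ∈ T, w b ≤ ∑ b ∈ insert m T', w b :=
    Finset.sum_le_sum_of_subset_of_nonneg hsub (fun i _ _ => hw i)
  have h2 : ∑ b ∈ insert m T', w b = w m + ∑ b ∈ T', w b :=
    Finset.sum_insert (Finset.notMem_erase _ _)
  have h3 : ∑ b ∈ T', w b ≤ k := by
    rcases T'.eq_empty_or_nonempty with he | hne
    · simp [he, hk]
    · set b0 := T'.min' hne with hb0
      have hb0T' : b0 ∈ T' := T'.min'_mem hne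
      have hb0T : b0 ∈ T := Finset.mem_of_mem_erase hb0T'
      have hsub2 : T' ⊆ Finset.Ico b0 m := by
        intro b hb
        refine Finset.mem_Ico.2 ⟨T'.min'_le _ hb, ?_⟩
        have hbm : b ≠ m := (Finset.mem_erase.1 hb).1
        have := hTm b (Finset.mem_of_mem_erase hb)
        omega
      calc ∑ b ∈ T', w b ≤ ∑ b ∈ Finset.Ico b0 m, w b :=
            Finset.sum_le_sum_of_subset_of_nonneg hsub2 (fun i _ _ => hw i)
        _ = pS w b0 (m - b0) := pS_Ico w b0 m
        _ ≤ k := le_of_lt (hTs _ hb0T)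
  linarith

private lemma coeff (q : ℕ) (k : ℝ) (hk : 0 < k) (w : ℕ → ℝ)
    (hper : ∀ i, w (i + q) = w i) (hw : ∀ i, 0 ≤ w i ∧ w i ≤ k)
    (len : ℕ → ℕ) (hlen : ∀ a m, m < len a ↔ pS w a m < k)
    (e j : ℕ) (hj : j < q) :
    (∑ a ∈ (Finset.range q).filter (fun a => a ≤ j ∧ j + e < a + len a), w a)
      + (∑ a ∈ (Finset.range q).filter (fun a => a ≤ q + j ∧ q + j + e < a + len a), w a)
      ≤ 2 * k := by
  classical
  set A1 := (Finset.range q).filter (fun a => a ≤ j ∧ j + e < a + len a) with hA1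
  set A2 := (Finset.range q).filter (fun a => a ≤ q + j ∧ q + j + e < a + len a) with hA2
  have himg : ∑ a ∈ A1, w a = ∑ b ∈ A1.image (· + q), w b := by
    rw [Finset.sum_image (by intro x _ y _ h; simp only at h; omega)]
    exact Finset.sum_congr rfl fun a _ => (hper a).symm
  have hdisj : Disjoint (A1.image (· + q)) A2 := by
    rw [Finset.disjoint_left]
    intro b hb1 hb2
    obtain ⟨a, _, rfl⟩ := Finset.mem_image.1 hb1
    have hb2' := (Finset.mem_filter.1 hb2).1
    rw [Finset.mem_range] at hb2'
    omega
  have hunion : ∑ a ∈ A1, w a + ∑ a ∈ A2, w a = ∑ b ∈ (A1.image (· + q)) ∪ A2, w b := by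
    rw [himg, Finset.sum_union hdisj]
  rw [hunion]
  have hkey : ∑ b ∈ (A1.image (· + q)) ∪ A2, w b ≤ k + w (q + j + e) := by
    refine win w k hk.le (fun i => (hw i).1) (q + j + e) _ ?_ ?_
    · intro b hb
      rcases Finset.mem_union.1 hb with hb | hb
      · obtain ⟨a, ha, rfl⟩ := Finset.mem_image.1 hb
        have := (Finset.mem_filter.1 ha).2
        omega
      · have := (Finset.mem_filter.1 hb).2
        omega
    · intro b hb
      rcases Finset.mem_union.1 hb with hb | hb
      · obtain ⟨a, ha, rfl⟩ := Finset.mem_image.1 hb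
        obtain ⟨haj, hacond⟩ := (Finset.mem_filter.1 ha).2
        have hsub : q + j + e - (a + q) = j + e - a := by omega
        rw [hsub, pS_per w q hper]
        refine (hlen a _).1 ?_
        omega
      · obtain ⟨haj, hacond⟩ := (Finset.mem_filter.1 hb).2
        refine (hlen b _).1 ?_
        omega
  have := (hw (q + j + e)).2
  linarith

private lemma double_count (q : ℕ) (k : ℝ) (hk : 0 < k)
    (w c : ℕ → ℝ) (hwper : ∀ i, w (i + q) = w i) (hcper : ∀ i, c (i + q) = c i)
    (hw : ∀ i, 0 ≤ w i ∧ w i ≤ k) (hc : ∀ i, 0 ≤ c i)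
    (len : ℕ → ℕ) (hlen : ∀ a m, m < len a ↔ pS w a m < k)
    (hlenq : ∀ a, len a ≤ q) (hlen1 : ∀ a, 1 ≤ len a) (e : ℕ) (he : e ≤ 1) :
    ∑ a ∈ Finset.range q, w a * (∑ t ∈ Finset.range (len a - e), c (a + t))
      ≤ 2 * k * ∑ j ∈ Finset.range q, c j := by
  classical
  have step1 : ∀ a ∈ Finset.range q,
      w a * (∑ t ∈ Finset.range (len a - e), c (a + t))
        = ∑ j ∈ Finset.range (2 * q),
            if a ≤ j ∧ j + e < a + len a then w a * c j else 0 := by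
    intro a ha
    rw [Finset.mem_range] at ha
    have h1 : ∑ t ∈ Finset.range (len a - e), c (a + t)
        = ∑ j ∈ Finset.Ico a (a + (len a - e)), c j := by
      rw [Finset.sum_Ico_eq_sum_range]
      congr 1
      congr 1
      omega
    have h2 : Finset.Ico a (a + (len a - e))
        = (Finset.range (2 * q)).filter (fun j => a ≤ j ∧ j + e < a + len a) := by
      ext j
      simp only [Finset.mem_Ico, Finset.mem_filter, Finset.mem_range]
      have hq1 := hlenq a; have hq2 := hlen1 a
      omega
    rw [h1, h2, Finset.sum_filter, Finset.mul_sum]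
    refine Finset.sum_congr rfl fun j _ => ?_
    split <;> simp
  rw [Finset.sum_congr rfl step1, Finset.sum_comm]
  have step2 : ∀ j, (∑ a ∈ Finset.range q, if a ≤ j ∧ j + e < a + len a then w a * c j else 0)
      = (∑ a ∈ (Finset.range q).filter (fun a => a ≤ j ∧ j + e < a + len a), w a) * c j := by
    intro j
    rw [Finset.sum_filter, Finset.sum_mul]
    refine Finset.sum_congr rfl fun a _ => ?_
    split <;> simp
  have hsplit : ∑ j ∈ Finset.range (2 * q),
      (∑ a ∈ Finset.range q, if a ≤ j ∧ j + e < a + len a then w a * c j else 0)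
      = ∑ j ∈ Finset.range q,
          ((∑ a ∈ Finset.range q, if a ≤ j ∧ j + e < a + len a then w a * c j else 0)
            + (∑ a ∈ Finset.range q,
                if a ≤ q + j ∧ q + j + e < a + len a then w a * c (q + j) else 0)) := by
    have h2q : 2 * q = q + q := by omega
    rw [h2q, Finset.sum_range_add, ← Finset.sum_add_distrib]
  rw [hsplit]
  have hbound : ∀ j ∈ Finset.range q,
      ((∑ a ∈ Finset.range q, if a ≤ j ∧ j + e < a + len a then w a * c j else 0)
        + (∑ a ∈ Finset.range q,
            if a ≤ q + j ∧ q + j + e < a + len a then w a * c (q + j) else 0))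
      ≤ 2 * k * c j := by
    intro j hj
    rw [Finset.mem_range] at hj
    have hcq : c (q + j) = c j := by rw [Nat.add_comm q j, hcper]
    rw [step2 j, step2 (q + j), hcq, ← add_mul]
    exact mul_le_mul_of_nonneg_right
      (coeff q k hk w hwper hw len hlen e j hj) (hc j)
  calc ∑ j ∈ Finset.range q, _ ≤ ∑ j ∈ Finset.range q, 2 * k * c j :=
        Finset.sum_le_sum hbound
    _ = 2 * k * ∑ j ∈ Finset.range q, c j := by rw [Finset.mul_sum]

/-- Clusters arranged cyclically are encoded by `q`-periodic functions on ℕ: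
`w j` is the weight of cluster `j`, `cc j` its cost, and `ac j` the cost of the
arc of the cycle connecting cluster `j` to cluster `j+1`. -/
theorem cycle_segment_of_good_density
    (q : ℕ) (hq : 1 ≤ q) (k δ : ℝ) (hk : 0 < k) (hδ : 0 ≤ δ)
    (w cc ac : ℕ → ℝ)
    (hper : ∀ j, w (j + q) = w j ∧ cc (j + q) = cc j ∧ ac (j + q) = ac j)
    (hw : ∀ j, 0 ≤ w j ∧ w j ≤ k) (hcc : ∀ j, 0 ≤ cc j) (hac : ∀ j, 0 ≤ ac j)
    (hW : 2 * k ≤ ∑ j ∈ Finset.range q, w j)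
    (htot : ∑ j ∈ Finset.range q, (cc j + ac j) ≤ δ * ∑ j ∈ Finset.range q, w j) :
    ∃ (a len : ℕ), 1 ≤ len ∧ len ≤ q ∧
      k ≤ ∑ t ∈ Finset.range len, w (a + t) ∧
      ∑ t ∈ Finset.range len, w (a + t) ≤ 2 * k ∧
      ∑ t ∈ Finset.range len, cc (a + t) +
        ∑ t ∈ Finset.range (len - 1), ac (a + t) ≤ 2 * δ * k := by
  classical
  have hwp : ∀ i, w (i + q) = w i := fun i => (hper i).1
  have hccp : ∀ i, cc (i + q) = cc i := fun i => (hper i).2.1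
  have hacp : ∀ i, ac (i + q) = ac i := fun i => (hper i).2.2
  set W := ∑ j ∈ Finset.range q, w j with hWdef
  have hSq : ∀ a, pS w a q = W := by
    intro a
    rw [pS_cycle w q hwp a]
    unfold pS
    simp [hWdef]
  have hex : ∀ a, ∃ n, k ≤ pS w a n := fun a => ⟨q, by rw [hSq]; linarith⟩
  let len : ℕ → ℕ := fun a => Nat.find (hex a)
  have hlen_spec : ∀ a, k ≤ pS w a (len a) := fun a => Nat.find_spec (hex a)
  have hlen : ∀ a m, m < len a ↔ pS w a m < k := by
    intro a m
    constructor
    · intro h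
      exact lt_of_not_ge (Nat.find_min (hex a) h)
    · intro h
      by_contra hc
      push_neg at hc
      have := pS_mono w (fun i => (hw i).1) a hc
      linarith [hlen_spec a]
  have hlenq : ∀ a, len a ≤ q := fun a => Nat.find_le (by rw [hSq]; linarith)
  have hlen1 : ∀ a, 1 ≤ len a := by
    intro a
    have h0 : (0:ℕ) < len a := (hlen a 0).2 (by simpa [pS] using hk)
    omega
  have hseg2k : ∀ a, pS w a (len a) ≤ 2 * k := by
    intro a
    have h1 : len a - 1 < len a := by have := hlen1 a; omega
    have h2 : pS w a (len a - 1) < k := (hlen a _).1 h1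
    have hl : len a = (len a - 1) + 1 := by have := hlen1 a; omega
    have h3 : pS w a (len a) = pS w a (len a - 1) + w (a + (len a - 1)) := by
      calc pS w a (len a) = pS w a ((len a - 1) + 1) := by rw [← hl]
        _ = pS w a (len a - 1) + w (a + (len a - 1)) := Finset.sum_range_succ _ _
    have := (hw (a + (len a - 1))).2
    linarith
  have hcc2 := double_count q k hk w cc hwp hccp hw hcc len hlen hlenq hlen1 0 (by norm_num)
  have hac2 := double_count q k hk w ac hwp hacp hw hac len hlen hlenq hlen1 1 (by norm_num)
  simp only [Nat.sub_zero] at hcc2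
  have hmain : ∑ a ∈ Finset.range q,
      w a * ((∑ t ∈ Finset.range (len a), cc (a + t))
        + ∑ t ∈ Finset.range (len a - 1), ac (a + t)) ≤ W * (2 * δ * k) := by
    have hdistrib : ∑ a ∈ Finset.range q,
        w a * ((∑ t ∈ Finset.range (len a), cc (a + t))
          + ∑ t ∈ Finset.range (len a - 1), ac (a + t))
        = (∑ a ∈ Finset.range q, w a * (∑ t ∈ Finset.range (len a), cc (a + t)))
          + ∑ a ∈ Finset.range q, w a * (∑ t ∈ Finset.range (len a - 1), ac (a + t)) := by
      rw [← Finset.sum_add_distrib]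
      exact Finset.sum_congr rfl fun a _ => by ring
    rw [hdistrib]
    have hsum : 2 * k * (∑ j ∈ Finset.range q, cc j) + 2 * k * (∑ j ∈ Finset.range q, ac j)
        = 2 * k * ∑ j ∈ Finset.range q, (cc j + ac j) := by
      rw [Finset.sum_add_distrib]
      ring
    have h4 : 2 * k * (∑ j ∈ Finset.range q, (cc j + ac j)) ≤ 2 * k * (δ * W) :=
      mul_le_mul_of_nonneg_left htot (by linarith)
    calc (∑ a ∈ Finset.range q, w a * (∑ t ∈ Finset.range (len a), cc (a + t)))
          + ∑ a ∈ Finset.range q, w a * (∑ t ∈ Finset.range (len a - 1), ac (a + t))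
        ≤ 2 * k * (∑ j ∈ Finset.range q, cc j) + 2 * k * (∑ j ∈ Finset.range q, ac j) :=
          add_le_add hcc2 hac2
      _ = 2 * k * ∑ j ∈ Finset.range q, (cc j + ac j) := hsum
      _ ≤ 2 * k * (δ * W) := h4
      _ = W * (2 * δ * k) := by ring
  by_contra hcon
  push_neg at hcon
  have hstep : ∀ a ∈ Finset.range q,
      2 * δ * k < (∑ t ∈ Finset.range (len a), cc (a + t))
        + ∑ t ∈ Finset.range (len a - 1), ac (a + t) := by
    intro a _
    exact hcon a (len a) (hlen1 a) (hlenq a) (hlen_spec a) (hseg2k a)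
  obtain ⟨a0, ha0q, ha0⟩ : ∃ a ∈ Finset.range q, 0 < w a := by
    by_contra h
    push_neg at h
    have : W ≤ 0 := Finset.sum_nonpos (fun a ha => h a ha)
    linarith
  have hlt : ∑ a ∈ Finset.range q, w a * (2 * δ * k)
      < ∑ a ∈ Finset.range q, w a * ((∑ t ∈ Finset.range (len a), cc (a + t))
          + ∑ t ∈ Finset.range (len a - 1), ac (a + t)) := by
    refine Finset.sum_lt_sum (fun a ha => ?_) ⟨a0, ha0q, ?_⟩
    · exact mul_le_mul_of_nonneg_left (le_of_lt (hstep a ha)) (hw a).1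
    · exact mul_lt_mul_of_pos_left (hstep a0 ha0q) ha0
  have heq : ∑ a ∈ Finset.range q, w a * (2 * δ * k) = W * (2 * δ * k) := by
    rw [← Finset.sum_mul]
  linarith
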